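/- Let Y1, Y2 be independent discrete real-valued random variables, and let X1, X2 be (possibly dependent) discrete real-valued random variables such that X1 ≤_st Y1 and, conditioned on any realization X1 = x, the conditional distribution of X2 is stochastically dominated by Y2. Then X1 + X2 ≤_st Y1 + Y2. -/

import Mathlib

open MeasureTheory ProbabilityTheory
open scoped ENNReal NNReal

/-- Discrete random variables: the lintegral of `f ∘ X` is a sum over the range of `X`. -/
lemma aux_lintegral_comp_discrete {Ω : Type*} [MeasurableSpace Ω] (μ : Measure Ω)
    (X : Ω → ℝ) (hX : Measurable X) (hd : (Set.range X).Countable) (f : ℝ → ℝ≥0∞) :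
    ∫⁻ ω, f (X ω) ∂μ = ∑' x : Set.range X, f ↑x * μ {ω | X ω = ↑x} := by
  haveI := hd.to_subtype
  have hu : (⋃ x : Set.range X, {ω | X ω = ↑x}) = Set.univ := by
    ext ω
    simp only [Set.mem_iUnion, Set.mem_univ, iff_true]
    exact ⟨⟨X ω, Set.mem_range_self ω⟩, rfl⟩
  have hm : ∀ x : Set.range X, MeasurableSet {ω | X ω = ↑x} :=
    fun x => hX (measurableSet_singleton _)
  have hdisj : Pairwise (Function.onFun Disjoint fun x : Set.range X => {ω | X ω = ↑x}) := by
    intro x y hxy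
    refine Set.disjoint_left.2 fun ω h1 h2 => ?_
    exact hxy (Subtype.ext ((h1 : X ω = ↑x).symm.trans h2))
  calc ∫⁻ ω, f (X ω) ∂μ
      = ∫⁻ ω in ⋃ x : Set.range X, {ω | X ω = ↑x}, f (X ω) ∂μ := by
        rw [hu, Measure.restrict_univ]
    _ = ∑' x : Set.range X, ∫⁻ ω in {ω | X ω = ↑x}, f (X ω) ∂μ :=
        lintegral_iUnion hm hdisj _
    _ = ∑' x : Set.range X, f ↑x * μ {ω | X ω = ↑x} := by
        refine tsum_congr fun x => ?_
        rw [setLIntegral_congr_fun (hm x)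
          (fun ω (h : X ω = ↑x) => by rw [h])]
        exact setLIntegral_const _ _

/-- Stochastic dominance extends from rays to arbitrary upper sets. -/
lemma aux_upper_dom {Ω₁ Ω₂ : Type*} [MeasurableSpace Ω₁] [MeasurableSpace Ω₂]
    (μ : Measure Ω₁) (ν : Measure Ω₂) [IsProbabilityMeasure μ] [IsProbabilityMeasure ν]
    (X : Ω₁ → ℝ) (Y : Ω₂ → ℝ) (hX : Measurable X) (hY : Measurable Y)
    (hdom : ∀ t : ℝ, μ {ω | t < X ω} ≤ ν {ω | t < Y ω})
    {U : Set ℝ} (hU : IsUpperSet U) : μ (X ⁻¹' U) ≤ ν (Y ⁻¹' U) := by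
  -- Dominance for closed rays, by continuity from above.
  have hIci : ∀ a : ℝ, μ (X ⁻¹' Set.Ici a) ≤ ν (Y ⁻¹' Set.Ici a) := by
    intro a
    have hray : Set.Ici a = ⋂ n : ℕ, Set.Ioi (a - 1 / (n + 1)) := by
      ext x
      simp only [Set.mem_Ici, Set.mem_iInter, Set.mem_Ioi]
      constructor
      · intro hx n
        have h1 : (0:ℝ) < 1 / (n + 1) := by positivity
        linarith
      · intro h
        by_contra hlt
        push_neg at hlt
        obtain ⟨n, hn⟩ := exists_nat_one_div_lt (by linarith : (0:ℝ) < a - x)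
        have := h n
        linarith
    have hmono : Antitone fun n : ℕ => Set.Ioi (a - 1 / ((n:ℝ) + 1)) := by
      intro m n hmn
      apply Set.Ioi_subset_Ioi
      have hmn' : (m:ℝ) ≤ (n:ℝ) := Nat.cast_le.2 hmn
      have h1 : (1:ℝ) / ((n:ℝ) + 1) ≤ 1 / ((m:ℝ) + 1) := by
        apply one_div_le_one_div_of_le (by positivity)
        linarith
      linarith
    have hνeq : ν (Y ⁻¹' Set.Ici a) = ⨅ n : ℕ, ν (Y ⁻¹' Set.Ioi (a - 1 / (n + 1))) := by
      rw [hray, Set.preimage_iInter]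
      exact Antitone.measure_iInter (fun m n hmn => Set.preimage_mono (hmono hmn))
        (fun n => (hY measurableSet_Ioi).nullMeasurableSet)
        ⟨0, measure_ne_top ν _⟩
    rw [hνeq]
    refine le_iInf fun n => ?_
    calc μ (X ⁻¹' Set.Ici a) ≤ μ (X ⁻¹' Set.Ioi (a - 1 / (n + 1))) := by
          apply measure_mono
          apply Set.preimage_mono
          intro x hx
          have h1 : (0:ℝ) < 1 / ((n:ℝ) + 1) := by positivity
          have hx' : a ≤ x := hx
          simp only [Set.mem_Ioi]
          linarith
      _ ≤ ν (Y ⁻¹' Set.Ioi (a - 1 / (n + 1))) := hdom _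
  rcases Set.eq_empty_or_nonempty U with hUe | hUne
  · simp [hUe]
  rcases Set.eq_empty_or_nonempty Uᶜ with hUc | ⟨z, hz⟩
  · have hh : U = Set.univ := Set.compl_empty_iff.1 hUc
    subst hh
    simp [measure_univ]
  · -- U is bounded below by z
    have hbdd : BddBelow U := by
      refine ⟨z, fun u hu => ?_⟩
      by_contra hzu
      push_neg at hzu
      exact hz (hU (le_of_lt hzu) hu)
    set a := sInf U with ha
    have hsub1 : Set.Ioi a ⊆ U := by
      intro x hx
      have hε : (0:ℝ) < x - a := sub_pos.2 (Set.mem_Ioi.1 hx)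
      obtain ⟨u, hu, hux⟩ := Real.lt_sInf_add_pos hUne hε
      exact hU (le_of_lt (by linarith : u < x)) hu
    have hsub2 : U ⊆ Set.Ici a := fun u hu => csInf_le hbdd hu
    by_cases haU : a ∈ U
    · have hUeq : U = Set.Ici a := by
        apply Set.Subset.antisymm hsub2
        intro x hx
        exact hU hx haU
      rw [hUeq]
      exact hIci a
    · have hUeq : U = Set.Ioi a := by
        apply Set.Subset.antisymm _ hsub1
        intro x hx
        rcases lt_or_eq_of_le (show a ≤ x from hsub2 hx) with h | h
        · exact h
        · exact absurd (h ▸ hx) haU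
      rw [hUeq]
      exact hdom a

/-- Monotone bounded functionals preserve stochastic dominance. -/
lemma aux_lintegral_mono_dom {Ω₁ Ω₂ : Type*} [MeasurableSpace Ω₁] [MeasurableSpace Ω₂]
    (μ : Measure Ω₁) (ν : Measure Ω₂) [IsProbabilityMeasure μ] [IsProbabilityMeasure ν]
    (X : Ω₁ → ℝ) (Y : Ω₂ → ℝ) (hX : Measurable X) (hY : Measurable Y)
    (hdom : ∀ t : ℝ, μ {ω | t < X ω} ≤ ν {ω | t < Y ω})
    (f : ℝ → ℝ≥0∞) (hf : Monotone f) (hf1 : ∀ x, f x ≤ 1) :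
    ∫⁻ ω, f (X ω) ∂μ ≤ ∫⁻ ω, f (Y ω) ∂ν := by
  set g : ℝ → ℝ := fun x => (f x).toReal with hg
  have hfne : ∀ x, f x ≠ ⊤ := fun x => ne_top_of_le_ne_top (by simp) (hf1 x)
  have hgmono : Monotone g := fun x y hxy => ENNReal.toReal_mono (hfne y) (hf hxy)
  have hgmeas : Measurable g := hgmono.measurable
  have hofg : ∀ x, ENNReal.ofReal (g x) = f x := fun x => ENNReal.ofReal_toReal (hfne x)
  have hgnn : ∀ x, 0 ≤ g x := fun x => ENNReal.toReal_nonneg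
  have keyX : ∫⁻ ω, f (X ω) ∂μ = ∫⁻ s in Set.Ioi (0:ℝ), μ {a | s < g (X a)} := by
    rw [← lintegral_eq_lintegral_meas_lt μ (ae_of_all μ fun ω => hgnn (X ω))
      ((hgmeas.comp hX).aemeasurable)]
    exact lintegral_congr fun ω => (hofg (X ω)).symm
  have keyY : ∫⁻ ω, f (Y ω) ∂ν = ∫⁻ s in Set.Ioi (0:ℝ), ν {a | s < g (Y a)} := by
    rw [← lintegral_eq_lintegral_meas_lt ν (ae_of_all ν fun ω => hgnn (Y ω))
      ((hgmeas.comp hY).aemeasurable)]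
    exact lintegral_congr fun ω => (hofg (Y ω)).symm
  rw [keyX, keyY]
  refine lintegral_mono fun s => ?_
  have hU : IsUpperSet {x : ℝ | s < g x} := fun x y hxy hx =>
    lt_of_lt_of_le hx (hgmono hxy)
  exact aux_upper_dom μ ν X Y hX hY hdom hU

/-- Let `Y₁, Y₂` be independent discrete real random variables (on a probability space
`(Ω₂, ν)`) and `X₁, X₂` possibly dependent discrete real random variables (on `(Ω₁, μ)`)
such that `X₁ ≤_st Y₁` and, conditioned on any realization `X₁ = x` of positive
probability, `X₂` is stochastically dominated by `Y₂`
(`Pr[X₂ > t ∧ X₁ = x] ≤ Pr[Y₂ > t]·Pr[X₁ = x]`).  Then `X₁ + X₂ ≤_st Y₁ + Y₂`. -/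
theorem stmt_1 {Ω₁ Ω₂ : Type*} [MeasurableSpace Ω₁] [MeasurableSpace Ω₂]
    (μ : Measure Ω₁) (ν : Measure Ω₂) [IsProbabilityMeasure μ] [IsProbabilityMeasure ν]
    (X₁ X₂ : Ω₁ → ℝ) (Y₁ Y₂ : Ω₂ → ℝ)
    (hX₁ : Measurable X₁) (hX₂ : Measurable X₂) (hY₁ : Measurable Y₁) (hY₂ : Measurable Y₂)
    (hdX₁ : (Set.range X₁).Countable) (hdX₂ : (Set.range X₂).Countable)
    (hdY₁ : (Set.range Y₁).Countable) (hdY₂ : (Set.range Y₂).Countable)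
    (hindep : IndepFun Y₁ Y₂ ν)
    (h₁ : ∀ t : ℝ, μ {ω | t < X₁ ω} ≤ ν {ω | t < Y₁ ω})
    (h₂ : ∀ x : ℝ, μ {ω | X₁ ω = x} ≠ 0 → ∀ t : ℝ,
      μ ({ω | t < X₂ ω} ∩ {ω | X₁ ω = x}) ≤ ν {ω | t < Y₂ ω} * μ {ω | X₁ ω = x}) :
    ∀ t : ℝ, μ {ω | t < X₁ ω + X₂ ω} ≤ ν {ω | t < Y₁ ω + Y₂ ω} := by
  intro t
  set f : ℝ → ℝ≥0∞ := fun x => ν {ω | t - x < Y₂ ω} with hf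
  have hfmono : Monotone f := by
    intro a b hab
    apply measure_mono
    intro ω hω
    exact lt_of_le_of_lt (by linarith : t - b ≤ t - a) hω
  have hf1 : ∀ x, f x ≤ 1 := fun x => prob_le_one
  haveI := hdX₁.to_subtype
  haveI := hdY₁.to_subtype
  -- Decompose the LHS event over the range of X₁
  have hLHS : μ {ω | t < X₁ ω + X₂ ω}
      = ∑' x : Set.range X₁, μ ({ω | X₁ ω = ↑x} ∩ {ω | t - ↑x < X₂ ω}) := by
    have heq : {ω | t < X₁ ω + X₂ ω}
        = ⋃ x : Set.range X₁, ({ω | X₁ ω = ↑x} ∩ {ω | t - ↑x < X₂ ω}) := by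
      ext ω
      simp only [Set.mem_setOf_eq, Set.mem_iUnion, Set.mem_inter_iff]
      constructor
      · intro h
        exact ⟨⟨X₁ ω, Set.mem_range_self ω⟩, rfl, by simpa using by linarith⟩
      · rintro ⟨x, h1, h2⟩
        have h2' : t - ↑x < X₂ ω := h2
        rw [h1]
        linarith
    rw [heq]
    apply measure_iUnion
    · intro x y hxy
      refine Set.disjoint_left.2 fun ω h1 h2 => ?_
      exact hxy (Subtype.ext (h1.1.symm.trans h2.1))
    · intro x
      exact (hX₁ (measurableSet_singleton _)).inter (hX₂ measurableSet_Ioi)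
  -- Decompose the RHS event over the range of Y₁ and use independence
  have hRHS : ν {ω | t < Y₁ ω + Y₂ ω}
      = ∑' y : Set.range Y₁, f ↑y * ν {ω | Y₁ ω = ↑y} := by
    have heq : {ω | t < Y₁ ω + Y₂ ω}
        = ⋃ y : Set.range Y₁, ({ω | Y₁ ω = ↑y} ∩ {ω | t - ↑y < Y₂ ω}) := by
      ext ω
      simp only [Set.mem_setOf_eq, Set.mem_iUnion, Set.mem_inter_iff]
      constructor
      · intro h
        exact ⟨⟨Y₁ ω, Set.mem_range_self ω⟩, rfl, by simpa using by linarith⟩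
      · rintro ⟨y, h1, h2⟩
        have h2' : t - ↑y < Y₂ ω := h2
        rw [h1]
        linarith
    have hdisj : Pairwise (Function.onFun Disjoint
        fun y : Set.range Y₁ => {ω | Y₁ ω = ↑y} ∩ {ω | t - ↑y < Y₂ ω}) := by
      intro x y hxy
      refine Set.disjoint_left.2 fun ω h1 h2 => ?_
      exact hxy (Subtype.ext (h1.1.symm.trans h2.1))
    have hmeas : ∀ y : Set.range Y₁,
        MeasurableSet ({ω | Y₁ ω = ↑y} ∩ {ω | t - ↑y < Y₂ ω}) :=
      fun y => (hY₁ (measurableSet_singleton _)).inter (hY₂ measurableSet_Ioi)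
    rw [heq, measure_iUnion hdisj hmeas]
    refine tsum_congr fun y => ?_
    have := hindep.measure_inter_preimage_eq_mul ({(y:ℝ)} : Set ℝ) (Set.Ioi (t - ↑y))
      (measurableSet_singleton _) measurableSet_Ioi
    calc ν ({ω | Y₁ ω = ↑y} ∩ {ω | t - ↑y < Y₂ ω})
        = ν (Y₁ ⁻¹' {(y:ℝ)} ∩ Y₂ ⁻¹' Set.Ioi (t - ↑y)) := rfl
      _ = ν (Y₁ ⁻¹' {(y:ℝ)}) * ν (Y₂ ⁻¹' Set.Ioi (t - ↑y)) := this
      _ = f ↑y * ν {ω | Y₁ ω = ↑y} := by rw [mul_comm]; rfl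
  rw [hLHS, hRHS, ← aux_lintegral_comp_discrete ν Y₁ hY₁ hdY₁ f]
  calc ∑' x : Set.range X₁, μ ({ω | X₁ ω = ↑x} ∩ {ω | t - ↑x < X₂ ω})
      ≤ ∑' x : Set.range X₁, f ↑x * μ {ω | X₁ ω = ↑x} := by
        refine Summable.tsum_le_tsum (fun x => ?_) ENNReal.summable ENNReal.summable
        by_cases hx : μ {ω | X₁ ω = ↑x} = 0
        · calc μ ({ω | X₁ ω = ↑x} ∩ {ω | t - ↑x < X₂ ω})
              ≤ μ {ω | X₁ ω = ↑x} := measure_mono Set.inter_subset_left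
            _ = 0 := hx
            _ ≤ _ := zero_le
        · rw [Set.inter_comm]
          exact h₂ ↑x hx (t - ↑x)
    _ = ∫⁻ ω, f (X₁ ω) ∂μ := (aux_lintegral_comp_discrete μ X₁ hX₁ hdX₁ f).symm
    _ ≤ ∫⁻ ω, f (Y₁ ω) ∂ν :=
        aux_lintegral_mono_dom μ ν X₁ Y₁ hX₁ hY₁ h₁ f hfmono hf1
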